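/- For every k ∈ ℕ, the element E[J_{n+1}^k] lies in the center of the group algebra ℂ[S_n], where J_{n+1} = Σ_{i=1}^n (i, n+1) is the Jucys–Murphy element of S_{n+1} and E : ℂ[S_{n+1}] → ℂ[S_n] is the linear map sending g ∈ S_n to itself and g ∈ S_{n+1} \ S_n to 0. -/

import Mathlib

open Classical in
/-- The restriction map `E : ℂ[S_{n+1}] → ℂ[S_n]` sending a permutation `g` to itself if
`g` fixes the last point (i.e. `g ∈ S_n`) and to `0` otherwise, extended linearly.
(We regard `ℂ[S_n]` as the span inside `ℂ[S_{n+1}]` of the permutations fixing the last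
point.) -/
noncomputable def Ecut (n : ℕ) (a : MonoidAlgebra ℂ (Equiv.Perm (Fin (n + 1)))) :
    MonoidAlgebra ℂ (Equiv.Perm (Fin (n + 1))) :=
  MonoidAlgebra.ofCoeff
    (Finsupp.filter (fun σ : Equiv.Perm (Fin (n + 1)) => σ (Fin.last n) = Fin.last n) a.coeff)

/-- The Jucys–Murphy element `J_{n+1} = Σ_{i=1}^n (i, n+1)` in `ℂ[S_{n+1}]`. -/
noncomputable def JM (n : ℕ) : MonoidAlgebra ℂ (Equiv.Perm (Fin (n + 1))) :=
  ∑ i : Fin n, MonoidAlgebra.single (Equiv.swap i.castSucc (Fin.last n)) (1 : ℂ)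

/-- Conjugation by a permutation fixing the last point preserves the Jucys–Murphy element. -/
lemma single_comm_JM (n : ℕ) (g : Equiv.Perm (Fin (n + 1)))
    (hg : g (Fin.last n) = Fin.last n) :
    MonoidAlgebra.single g (1 : ℂ) * JM n = JM n * MonoidAlgebra.single g 1 := by
  have hne : ∀ i : Fin n, g i.castSucc ≠ Fin.last n := by
    intro i h
    exact (Fin.castSucc_lt_last i).ne (g.injective (h.trans hg.symm))
  have hne' : ∀ i : Fin n, g⁻¹ i.castSucc ≠ Fin.last n := by
    intro i h
    have : i.castSucc = Fin.last n := by
      have := congrArg g h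
      simpa [hg] using this
    exact (Fin.castSucc_lt_last i).ne this
  let e : Equiv.Perm (Fin n) :=
    { toFun := fun i => (g i.castSucc).castPred (hne i)
      invFun := fun i => (g⁻¹ i.castSucc).castPred (hne' i)
      left_inv := fun i => by
        apply Fin.castSucc_injective
        simp [Fin.castSucc_castPred]
      right_inv := fun i => by
        apply Fin.castSucc_injective
        simp [Fin.castSucc_castPred] }
  unfold JM
  rw [Finset.mul_sum, Finset.sum_mul,
    ← Equiv.sum_comp e (fun i : Fin n =>
      MonoidAlgebra.single (Equiv.swap i.castSucc (Fin.last n)) (1 : ℂ) *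
        MonoidAlgebra.single g 1)]
  refine Finset.sum_congr rfl fun i _ => ?_
  rw [MonoidAlgebra.single_mul_single, MonoidAlgebra.single_mul_single, one_mul]
  congr 1
  show g * Equiv.swap i.castSucc (Fin.last n)
      = Equiv.swap ((g i.castSucc).castPred (hne i)).castSucc (Fin.last n) * g
  rw [Equiv.mul_swap_eq_swap_mul, hg, Fin.castSucc_castPred]

/-- For every `k`, the element `E[J_{n+1}^k]` lies in the center of the group algebra
`ℂ[S_n]`: it is supported on permutations fixing the last point, and it commutes with
every element of `ℂ[S_n]`. -/
theorem Ecut_JM_pow_mem_center (n k : ℕ) :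
    (∀ σ ∈ (Ecut n ((JM n) ^ k)).coeff.support, σ (Fin.last n) = Fin.last n) ∧
    ∀ a : MonoidAlgebra ℂ (Equiv.Perm (Fin (n + 1))),
      (∀ σ ∈ a.coeff.support, σ (Fin.last n) = Fin.last n) →
      Commute (Ecut n ((JM n) ^ k)) a := by
  classical
  constructor
  · intro σ hσ
    rw [Ecut, MonoidAlgebra.coeff_ofCoeff, Finsupp.support_filter, Finset.mem_filter] at hσ
    exact hσ.2
  · intro a ha
    -- first: commuting with a single `single σ 1` for `σ` fixing the last point
    have key : ∀ σ : Equiv.Perm (Fin (n + 1)), σ (Fin.last n) = Fin.last n →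
        Commute (Ecut n ((JM n) ^ k)) (MonoidAlgebra.single σ (1 : ℂ)) := by
      intro σ hσ
      have hσinv : σ⁻¹ (Fin.last n) = Fin.last n := by
        conv_lhs => rw [← hσ]
        exact Equiv.symm_apply_apply σ _
      have hcomm : MonoidAlgebra.single σ (1 : ℂ) * (JM n) ^ k
          = (JM n) ^ k * MonoidAlgebra.single σ 1 := by
        have hc0 : Commute (MonoidAlgebra.single σ (1 : ℂ)) (JM n) := single_comm_JM n σ hσ
        exact hc0.pow_right k
      have hval : ∀ y : Equiv.Perm (Fin (n + 1)),
          ((JM n) ^ k).coeff (σ⁻¹ * y) = ((JM n) ^ k).coeff (y * σ⁻¹) := by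
        intro y
        have := congrArg (fun f : MonoidAlgebra ℂ (Equiv.Perm (Fin (n + 1))) => f.coeff y) hcomm
        simpa [MonoidAlgebra.coeff_single_mul_apply, MonoidAlgebra.coeff_mul_single_apply] using this
      show Ecut n ((JM n) ^ k) * MonoidAlgebra.single σ 1
          = MonoidAlgebra.single σ 1 * Ecut n ((JM n) ^ k)
      ext y
      rw [MonoidAlgebra.coeff_mul_single_apply, MonoidAlgebra.coeff_single_mul_apply, one_mul, mul_one,
        Ecut, MonoidAlgebra.coeff_ofCoeff, Finsupp.filter_apply, Finsupp.filter_apply]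
      by_cases h : y (Fin.last n) = Fin.last n
      · rw [if_pos, if_pos, hval]
        · show σ⁻¹ (y (Fin.last n)) = Fin.last n
          rw [h, hσinv]
        · show y (σ⁻¹ (Fin.last n)) = Fin.last n
          rw [hσinv, h]
      · rw [if_neg, if_neg]
        · intro hc
          apply h
          have : σ⁻¹ (y (Fin.last n)) = Fin.last n := hc
          have := congrArg σ this
          simpa [hσ] using this
        · intro hc
          apply h
          have : y (σ⁻¹ (Fin.last n)) = Fin.last n := hc
          rwa [hσinv] at this
    -- decompose `a` as a sum of singles
    rw [show a = a.coeff.sum MonoidAlgebra.single from (MonoidAlgebra.sum_coeff_single a).symm]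
    rw [Finsupp.sum]
    apply Commute.sum_right
    intro σ hσ
    have : MonoidAlgebra.single σ (a.coeff σ) = a.coeff σ • MonoidAlgebra.single σ (1 : ℂ) := by
      rw [MonoidAlgebra.smul_single', mul_one]
    rw [this]
    exact (key σ (ha σ hσ)).smul_right _
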